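/- Let F be a finite field of odd cardinality q with quadratic character χ, and S_m(x,y) = χ(x)·χ(m·x + y). If (u,v) ≠ (0,0) and m·u + v ≠ 0, then the autocorrelation ∑_{x,y} S_m(x,y)·S_m(x+u,y+v) equals 1 - q when u = 0, and equals 1 when u ≠ 0. -/

import Mathlib

open Finset

lemma quad_shift_sum (F : Type*) [Field F] [Fintype F] [DecidableEq F]
    (hF : ringChar F ≠ 2) (c : F) (hc : c ≠ 0) :
    ∑ x : F, quadraticChar F x * quadraticChar F (x + c) = -1 := by
  have h0 : ∑ x : F, quadraticChar F x * quadraticChar F (x + c)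
      = ∑ x ∈ univ \ {(0:F)}, quadraticChar F (1 + c * x⁻¹) := by
    rw [← Finset.sum_subset (subset_univ (univ \ {(0:F)}))]
    · apply Finset.sum_congr rfl
      intro x hx
      simp only [mem_sdiff, mem_singleton] at hx
      have hx0 : x ≠ 0 := hx.2
      have hxc : x + c = x * (1 + c * x⁻¹) := by field_simp
      have hsq : quadraticChar F x * quadraticChar F x = 1 := by
        have := quadraticChar_sq_one (F := F) hx0
        rwa [sq] at this
      rw [hxc, map_mul, ← mul_assoc, hsq, one_mul]
    · intro x _ hx
      simp only [mem_sdiff, mem_singleton, mem_univ, true_and, not_not] at hx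
      simp [hx]
  rw [h0]
  have h1 : ∑ x ∈ univ \ {(0:F)}, quadraticChar F (1 + c * x⁻¹)
      = ∑ t ∈ univ \ {(1:F)}, quadraticChar F t := by
    apply Finset.sum_nbij' (fun x => 1 + c * x⁻¹) (fun t => c * (t - 1)⁻¹)
    · intro x hx
      simp only [mem_sdiff, mem_singleton, mem_univ, true_and] at hx ⊢
      intro hcontra
      have : c * x⁻¹ = 0 := by linear_combination hcontra
      rcases mul_eq_zero.1 this with h' | h'
      · exact hc h'
      · exact hx (inv_eq_zero.1 h')
    · intro t ht
      simp only [mem_sdiff, mem_singleton, mem_univ, true_and] at ht ⊢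
      intro hcontra
      rcases mul_eq_zero.1 hcontra with h' | h'
      · exact hc h'
      · exact ht (sub_eq_zero.1 (inv_eq_zero.1 h'))
    · intro x hx
      simp only [mem_sdiff, mem_singleton, mem_univ, true_and] at hx
      field_simp
      simp [hc]
    · intro t ht
      simp only [mem_sdiff, mem_singleton, mem_univ, true_and] at ht
      have h1 : t - 1 ≠ 0 := sub_ne_zero.2 ht
      field_simp
      ring
    · intros; rfl
  rw [h1, Finset.sum_sdiff_eq_sub (by simp)]
  rw [quadraticChar_sum_zero (F := F) hF]
  simp

theorem circulant_legendre_autocorrelation_case1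
    (F : Type*) [Field F] [Fintype F] [DecidableEq F]
    (hodd : Odd (Fintype.card F))
    (χ : F → ℤ) (hχ : ∀ x, χ x = quadraticChar F x)
    (S : F → F × F → ℤ) (hS : ∀ m x y, S m (x, y) = χ x * χ (m * x + y))
    (m : F) (u v : F) (huv : (u, v) ≠ (0, 0)) (h : m * u + v ≠ 0) :
    (u = 0 → ∑ x : F, ∑ y : F, S m (x, y) * S m (x + u, y + v) = 1 - (Fintype.card F : ℤ)) ∧
    (u ≠ 0 → ∑ x : F, ∑ y : F, S m (x, y) * S m (x + u, y + v) = 1) := by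
  have hF : ringChar F ≠ 2 := by
    intro h2
    have h2' := (FiniteField.even_card_iff_char_two (F := F)).mp h2
    have := Nat.odd_iff.mp hodd
    omega
  have inner : ∀ x : F, ∑ y : F, χ (m * x + y) * χ (m * (x + u) + (y + v)) = -1 := by
    intro x
    have heq : ∑ y : F, χ (m * x + y) * χ (m * (x + u) + (y + v))
        = ∑ t : F, quadraticChar F t * quadraticChar F (t + (m * u + v)) := by
      apply Fintype.sum_equiv (Equiv.addLeft (m * x))
      intro y
      simp only [Equiv.coe_addLeft, hχ]
      ring_nf
    rw [heq, quad_shift_sum F hF _ h]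
  have main : ∑ x : F, ∑ y : F, S m (x, y) * S m (x + u, y + v)
      = - ∑ x : F, χ x * χ (x + u) := by
    rw [← Finset.sum_neg_distrib]
    apply Finset.sum_congr rfl
    intro x _
    have : ∑ y : F, S m (x, y) * S m (x + u, y + v)
        = (χ x * χ (x + u)) * ∑ y : F, χ (m * x + y) * χ (m * (x + u) + (y + v)) := by
      rw [Finset.mul_sum]
      apply Finset.sum_congr rfl
      intro y _
      rw [hS, hS]
      ring
    rw [this, inner x]
    ring
  constructor
  · intro hu
    subst hu
    rw [main]
    have hsum : ∑ x : F, χ x * χ (x + 0) = (Fintype.card F : ℤ) - 1 := by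
      have : ∀ x : F, χ x * χ (x + 0) = if x = 0 then 0 else 1 := by
        intro x
        by_cases hx : x = 0
        · simp [hx, hχ]
        · simp only [hx, if_false, add_zero, hχ]
          have := quadraticChar_sq_one (F := F) hx
          rwa [sq] at this
      rw [Finset.sum_congr rfl (fun x _ => this x), Finset.sum_ite, Finset.sum_const,
        Finset.sum_const]
      have hfil : (univ.filter fun x : F => ¬x = 0) = univ \ {0} := by ext; simp
      have hcard : (univ.filter fun x : F => ¬x = 0).card = Fintype.card F - 1 := by
        rw [hfil, Finset.card_sdiff_of_subset (by simp)]; simp [Finset.card_univ]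
      have hpos : 1 ≤ Fintype.card F := Fintype.card_pos
      rw [hcard]
      have hs : (Fintype.card F - 1) • (1:ℤ) = (Fintype.card F : ℤ) - 1 := by
        rw [nsmul_eq_mul]
        push_cast [Nat.cast_sub hpos]
        ring
      simp [hs]
      omega
    rw [hsum]; ring
  · intro hu
    rw [main]
    have hsum : ∑ x : F, χ x * χ (x + u) = -1 := by
      simp only [hχ]
      exact quad_shift_sum F hF u hu
    rw [hsum]; ring
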